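/- Let (X, μ) be a probability space and P a self-adjoint operator on L² with P1 = 1 and ‖Pf‖ ≤ ρ‖f‖ for f ⊥ 1. For measurable sets B₁, B₂ ⊆ X with μ(Bᵢ) = bᵢ, one has |⟨1_{B₁}, P 1_{B₂}⟩ − b₁b₂| ≤ ρ √(b₁ b₂ (1−b₁)(1−b₂)). -/

import Mathlib

open MeasureTheory
open scoped RealInnerProductSpace

/-- Expander mixing-type bound: if `P` is self-adjoint on `L²(X,μ)` with
`P 1 = 1` and `‖Pf‖ ≤ ρ‖f‖` for `f ⊥ 1`, then for measurable `B₁, B₂` with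
`μ Bᵢ = bᵢ`, `|⟨1_{B₁}, P 1_{B₂}⟩ − b₁b₂| ≤ ρ √(b₁b₂(1−b₁)(1−b₂))`. -/
theorem expander_mixing
    {X : Type*} [MeasurableSpace X] (μ : Measure X) [IsProbabilityMeasure μ]
    (P : Lp ℝ 2 μ →L[ℝ] Lp ℝ 2 μ) (ρ : ℝ) (hρ : 0 ≤ ρ)
    (one : Lp ℝ 2 μ)
    (hone : one = indicatorConstLp 2 MeasurableSet.univ (measure_ne_top μ _) (1 : ℝ))
    (hP1 : P one = one)
    (hSA : ∀ f g : Lp ℝ 2 μ, ⟪P f, g⟫ = ⟪f, P g⟫)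
    (hbound : ∀ f : Lp ℝ 2 μ, ⟪f, one⟫ = 0 → ‖P f‖ ≤ ρ * ‖f‖)
    (B₁ B₂ : Set X) (hB₁ : MeasurableSet B₁) (hB₂ : MeasurableSet B₂)
    (b₁ b₂ : ℝ) (hb₁ : (μ B₁).toReal = b₁) (hb₂ : (μ B₂).toReal = b₂) :
    |⟪indicatorConstLp 2 hB₁ (measure_ne_top μ B₁) (1 : ℝ),
        P (indicatorConstLp 2 hB₂ (measure_ne_top μ B₂) (1 : ℝ))⟫ - b₁ * b₂| ≤
      ρ * Real.sqrt (b₁ * b₂ * (1 - b₁) * (1 - b₂)) := by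
  set f₁ : Lp ℝ 2 μ := indicatorConstLp 2 hB₁ (measure_ne_top μ B₁) (1 : ℝ) with hf₁
  set f₂ : Lp ℝ 2 μ := indicatorConstLp 2 hB₂ (measure_ne_top μ B₂) (1 : ℝ) with hf₂
  have hone_ae : (one : X → ℝ) =ᵐ[μ] fun _ => (1 : ℝ) := by
    rw [hone]
    filter_upwards [indicatorConstLp_coeFn (p := 2) (hs := MeasurableSet.univ)
      (hμs := measure_ne_top μ Set.univ) (c := (1 : ℝ))] with x hx
    simp [hx]
  have key : ∀ (s : Set X) (hs : MeasurableSet s),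
      ⟪indicatorConstLp 2 hs (measure_ne_top μ s) (1 : ℝ), one⟫ = (μ s).toReal := by
    intro s hs
    rw [L2.inner_indicatorConstLp_one (𝕜 := ℝ) hs (measure_ne_top μ s) one]
    rw [setIntegral_congr_ae hs (by filter_upwards [hone_ae] with x hx _ using hx)]
    simp
    rfl
  have h1 : ⟪f₁, one⟫ = b₁ := by rw [hf₁, key B₁ hB₁, hb₁]
  have h2 : ⟪f₂, one⟫ = b₂ := by rw [hf₂, key B₂ hB₂, hb₂]
  have honeone : ⟪one, one⟫ = 1 := by
    have h := key Set.univ MeasurableSet.univ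
    rw [← hone] at h
    simpa using h
  have hself : ∀ (s : Set X) (hs : MeasurableSet s),
      ⟪indicatorConstLp 2 hs (measure_ne_top μ s) (1 : ℝ),
        indicatorConstLp 2 hs (measure_ne_top μ s) (1 : ℝ)⟫ = (μ s).toReal := by
    intro s hs
    rw [L2.inner_indicatorConstLp_one (𝕜 := ℝ) hs (measure_ne_top μ s)]
    rw [setIntegral_congr_ae hs (by
      filter_upwards [indicatorConstLp_coeFn_mem (p := 2) (hs := hs)
        (hμs := measure_ne_top μ s) (c := (1 : ℝ))] with x hx h using hx h)]
    simp
    rfl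
  have h11 : ⟪f₁, f₁⟫ = b₁ := by rw [hf₁, hself B₁ hB₁, hb₁]
  have h22 : ⟪f₂, f₂⟫ = b₂ := by rw [hf₂, hself B₂ hB₂, hb₂]
  set g₁ : Lp ℝ 2 μ := f₁ - b₁ • one with hg₁
  set g₂ : Lp ℝ 2 μ := f₂ - b₂ • one with hg₂
  have hg₁one : ⟪g₁, one⟫ = 0 := by
    simp [hg₁, inner_sub_left, real_inner_smul_left, h1, honeone]
    rw [← real_inner_self_eq_norm_sq, honeone]; ring
  have hg₂one : ⟪g₂, one⟫ = 0 := by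
    simp [hg₂, inner_sub_left, real_inner_smul_left, h2, honeone]
    rw [← real_inner_self_eq_norm_sq, honeone]; ring
  have hg₁sq : ⟪g₁, g₁⟫ = b₁ * (1 - b₁) := by
    simp only [hg₁, inner_sub_left, inner_sub_right, real_inner_smul_left,
      real_inner_smul_right, h1, h11, honeone]
    rw [real_inner_comm f₁ one, h1]
    ring
  have hg₂sq : ⟪g₂, g₂⟫ = b₂ * (1 - b₂) := by
    simp only [hg₂, inner_sub_left, inner_sub_right, real_inner_smul_left,
      real_inner_smul_right, h2, h22, honeone]
    rw [real_inner_comm f₂ one, h2]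
    ring
  have honePg₂ : ⟪one, P g₂⟫ = 0 := by
    rw [← hSA one g₂, hP1, real_inner_comm, hg₂one]
  have hPmain : ⟪f₁, P f₂⟫ = ⟪g₁, P g₂⟫ + b₁ * b₂ := by
    have hexp : f₁ = g₁ + b₁ • one := by rw [hg₁]; abel
    have hexp2 : f₂ = g₂ + b₂ • one := by rw [hg₂]; abel
    have hPf₂ : P f₂ = P g₂ + b₂ • one := by
      rw [hexp2, map_add, ContinuousLinearMap.map_smul, hP1]
    rw [hexp, hPf₂]
    simp only [inner_add_left, inner_add_right, real_inner_smul_left,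
      real_inner_smul_right, hg₁one, honeone, honePg₂]
    ring
  have hg₁norm : ‖g₁‖ = Real.sqrt (b₁ * (1 - b₁)) := by
    rw [← hg₁sq, real_inner_self_eq_norm_sq, Real.sqrt_sq (norm_nonneg _)]
  have hg₂norm : ‖g₂‖ = Real.sqrt (b₂ * (1 - b₂)) := by
    rw [← hg₂sq, real_inner_self_eq_norm_sq, Real.sqrt_sq (norm_nonneg _)]
  have hb₁nn : 0 ≤ b₁ * (1 - b₁) := by
    rw [← hg₁sq]; exact real_inner_self_nonneg
  have hcs : |⟪g₁, P g₂⟫| ≤ ρ * Real.sqrt (b₁ * b₂ * (1 - b₁) * (1 - b₂)) := by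
    calc |⟪g₁, P g₂⟫| ≤ ‖g₁‖ * ‖P g₂‖ := abs_real_inner_le_norm _ _
      _ ≤ ‖g₁‖ * (ρ * ‖g₂‖) := by
          exact mul_le_mul_of_nonneg_left (hbound g₂ hg₂one) (norm_nonneg _)
      _ = ρ * (‖g₁‖ * ‖g₂‖) := by ring
      _ = ρ * Real.sqrt (b₁ * b₂ * (1 - b₁) * (1 - b₂)) := by
          rw [hg₁norm, hg₂norm, ← Real.sqrt_mul hb₁nn]
          ring_nf
  calc |⟪f₁, P f₂⟫ - b₁ * b₂| = |⟪g₁, P g₂⟫| := by rw [hPmain]; ring_nf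
    _ ≤ ρ * Real.sqrt (b₁ * b₂ * (1 - b₁) * (1 - b₂)) := hcs
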